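/- Let N ≥ 1, p > N+1 and q = p/(p−1). There is a constant C, depending only on p and N, such that for every measurable f : ℝ×ℝ^N → [0,∞], every x, θ ∈ ℝ^N, every 0 ≤ t < s, and every measurable set R ⊆ ℝ^N of finite Lebesgue measure |R|: ∫_R ∫_t^{(t+s)/2} f(τ, x + (σ+θ)(τ−t)) dτ dσ ≤ C |R|^{1/q} ‖f‖_{L^p(ℝ×ℝ^N)} (s−t)^{1−(N+1)/p}. -/

import Mathlib

open MeasureTheory ENNReal

set_option maxHeartbeats 2000000 in
/-- There is a constant `C`, depending only on `p` and `N`, such that for all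
nonnegative measurable `f`, all `x, θ`, all `0 ≤ t < s`, and every measurable `R` of finite
measure: `∫_R ∫_t^{(t+s)/2} f(τ, x + (σ+θ)(τ−t)) dτ dσ ≤ C |R|^{1/q} ‖f‖_p (s−t)^{1−(N+1)/p}`. -/
theorem cone_integral_estimate {N : ℕ} (hN : 1 ≤ N)
    (p : ℝ) (hp : (N : ℝ) + 1 < p) (q : ℝ) (hq : q = p / (p - 1)) :
    ∃ C : ℝ, 0 < C ∧
      ∀ f : ℝ × EuclideanSpace ℝ (Fin N) → ℝ≥0∞, Measurable f →
      ∀ x θ : EuclideanSpace ℝ (Fin N), ∀ t s : ℝ, 0 ≤ t → t < s →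
      ∀ R : Set (EuclideanSpace ℝ (Fin N)), MeasurableSet R → volume R < ⊤ →
        (∫⁻ σ in R, ∫⁻ τ in Set.Ioc t ((t + s) / 2), f (τ, x + (τ - t) • (σ + θ)))
          ≤ ENNReal.ofReal C * (volume R) ^ (1 / q) *
            (∫⁻ z, f z ^ p) ^ (1 / p) *
            ENNReal.ofReal ((s - t) ^ (1 - ((N : ℝ) + 1) / p)) := by
  have hN1 : (1 : ℝ) ≤ (N : ℝ) := by exact_mod_cast hN
  have hp1 : 1 < p := by linarith
  have hp0 : 0 < p := by linarith
  have hpq : p.HolderConjugate q := (Real.holderConjugate_iff_eq_conjExponent hp1).2 hq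
  have hq0 : 0 < q := hpq.symm.pos
  have hq1 : 1 < q := hpq.symm.lt
  set a : ℝ := (N : ℝ) * q / p with ha_def
  have hpne : p ≠ 0 := hp0.ne'
  have hp1ne : p - 1 ≠ 0 := by linarith
  have hNpos : (0 : ℝ) < (N : ℝ) := by linarith
  have ha_eq : a = (N : ℝ) / (p - 1) := by
    rw [ha_def, hq]; field_simp
  have ha0 : 0 < a := by
    rw [ha_eq]; exact div_pos hNpos (by linarith)
  have ha1 : a < 1 := by
    rw [ha_eq, div_lt_one (by linarith)]; linarith
  have h1a : (0 : ℝ) < 1 - a := by linarith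
  set e : ℝ := 1 - ((N : ℝ) + 1) / p with he_def
  have hinv : 1 / p + 1 / q = 1 := by
    have := hpq.inv_add_inv_eq_one
    rw [one_div, one_div]; exact this
  have he : e = (1 - a) / q := by
    have haq : a / q = (N : ℝ) / p := by
      rw [ha_def]; field_simp
    have h2 : (1 - a) / q = 1 / q - a / q := by ring
    have h3 : ((N : ℝ) + 1) / p = (N : ℝ) / p + 1 / p := by ring
    rw [he_def, h2, haq, h3]; linarith
  have he0 : 0 < e := by
    rw [he]; positivity
  set C : ℝ := (2⁻¹ : ℝ) ^ e * ((1 - a)⁻¹) ^ (1 / q) with hC_def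
  have hC : 0 < C := by positivity
  refine ⟨C, hC, ?_⟩
  intro f hf x θ t s ht hts R hR hRfin
  set m : ℝ := (t + s) / 2 with hm_def
  have htm : t < m := by rw [hm_def]; linarith
  have hmt : m - t = (s - t) / 2 := by rw [hm_def]; ring
  set g : ℝ → ℝ≥0∞ := fun τ => ∫⁻ y, f (τ, y) ^ p with hg_def
  have hfp : Measurable fun z : ℝ × EuclideanSpace ℝ (Fin N) => f z ^ p :=
    hf.pow measurable_const
  have hg : Measurable g := hfp.lintegral_prod_right'
  -- measurability of the full integrand on the product
  have hFm : Measurable fun z : EuclideanSpace ℝ (Fin N) × ℝ =>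
      f (z.2, x + (z.2 - t) • (z.1 + θ)) := by
    apply hf.comp
    exact measurable_snd.prodMk (measurable_const.add
      ((measurable_snd.sub measurable_const).smul (measurable_fst.add measurable_const)))
  -- swap the order of integration
  have hswap : (∫⁻ σ in R, ∫⁻ τ in Set.Ioc t m, f (τ, x + (τ - t) • (σ + θ)))
      = ∫⁻ τ in Set.Ioc t m, ∫⁻ σ in R, f (τ, x + (τ - t) • (σ + θ)) :=
    lintegral_lintegral_swap hFm.aemeasurable
  -- the key pointwise (in τ) estimate, via Hölder in σ and a change of variables
  have key : ∀ τ : ℝ, t < τ →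
      (∫⁻ σ in R, f (τ, x + (τ - t) • (σ + θ))) ≤
        volume R ^ (1 / q) *
          (ENNReal.ofReal ((τ - t) ^ (-((N : ℝ) / p))) * (g τ) ^ (1 / p)) := by
    intro τ hτ
    set c : ℝ := τ - t with hc_def
    have hc : 0 < c := by rw [hc_def]; linarith
    have hh : Measurable fun σ : EuclideanSpace ℝ (Fin N) => f (τ, x + c • (σ + θ)) := by
      apply hf.comp
      exact measurable_const.prodMk (measurable_const.add
        ((measurable_id.add measurable_const).const_smul c))
    have holder : (∫⁻ σ in R, f (τ, x + c • (σ + θ))) ≤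
        (∫⁻ σ in R, f (τ, x + c • (σ + θ)) ^ p) ^ (1 / p) * volume R ^ (1 / q) := by
      have h := ENNReal.lintegral_mul_le_Lp_mul_Lq (volume.restrict R) hpq
        hh.aemeasurable (aemeasurable_const (b := (1 : ℝ≥0∞)))
      simpa [ENNReal.one_rpow, setLIntegral_one, Measure.restrict_apply_univ] using h
    have scale : (∫⁻ σ, f (τ, x + c • (σ + θ)) ^ p)
        = ENNReal.ofReal (c ^ (-(N : ℝ))) * g τ := by
      have harg : ∀ σ : EuclideanSpace ℝ (Fin N),
          x + c • (σ + θ) = c • σ + (x + c • θ) := by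
        intro σ; rw [smul_add]; abel
      simp_rw [harg]
      have hG : Measurable fun y : EuclideanSpace ℝ (Fin N) =>
          f (τ, y + (x + c • θ)) ^ p := by
        apply (hf.comp (measurable_const.prodMk (measurable_id.add measurable_const))).pow
          measurable_const
      calc (∫⁻ σ, f (τ, c • σ + (x + c • θ)) ^ p)
          = ∫⁻ y, f (τ, y + (x + c • θ)) ^ p
              ∂(Measure.map (c • ·) (volume : Measure (EuclideanSpace ℝ (Fin N)))) :=
            (lintegral_map hG (measurable_const_smul c)).symm
        _ = ENNReal.ofReal |((c : ℝ) ^ Module.finrank ℝ (EuclideanSpace ℝ (Fin N)))⁻¹| *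
              ∫⁻ y, f (τ, y + (x + c • θ)) ^ p := by
            rw [Measure.map_addHaar_smul volume hc.ne', lintegral_smul_measure, smul_eq_mul]
        _ = ENNReal.ofReal (c ^ (-(N : ℝ))) * g τ := by
            rw [lintegral_add_right_eq_self (fun y => f (τ, y) ^ p) (x + c • θ)]
            congr 1
            rw [finrank_euclideanSpace_fin, abs_of_pos (by positivity),
              ← Real.rpow_natCast c N, ← Real.rpow_neg hc.le]
    have hfac : (ENNReal.ofReal (c ^ (-(N : ℝ))) * g τ) ^ (1 / p)
        = ENNReal.ofReal (c ^ (-((N : ℝ) / p))) * (g τ) ^ (1 / p) := by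
      rw [ENNReal.mul_rpow_of_nonneg _ _ (by positivity),
        ENNReal.ofReal_rpow_of_pos (Real.rpow_pos_of_pos hc _),
        ← Real.rpow_mul hc.le, show -(N : ℝ) * (1 / p) = -((N : ℝ) / p) by ring]
    calc (∫⁻ σ in R, f (τ, x + c • (σ + θ)))
        ≤ (∫⁻ σ in R, f (τ, x + c • (σ + θ)) ^ p) ^ (1 / p) * volume R ^ (1 / q) := holder
      _ ≤ (ENNReal.ofReal (c ^ (-(N : ℝ))) * g τ) ^ (1 / p) * volume R ^ (1 / q) := by
          gcongr
          exact (setLIntegral_le_lintegral _ _).trans scale.le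
      _ = volume R ^ (1 / q) *
            (ENNReal.ofReal (c ^ (-((N : ℝ) / p))) * (g τ) ^ (1 / p)) := by
          rw [hfac]; ring
  -- Hölder in τ
  have hwmeas : Measurable fun τ : ℝ => ENNReal.ofReal ((τ - t) ^ (-((N : ℝ) / p))) :=
    ENNReal.measurable_ofReal.comp ((measurable_id.sub measurable_const).pow measurable_const)
  have holderτ : (∫⁻ τ in Set.Ioc t m,
        ENNReal.ofReal ((τ - t) ^ (-((N : ℝ) / p))) * (g τ) ^ (1 / p)) ≤
      (∫⁻ τ in Set.Ioc t m, ENNReal.ofReal ((τ - t) ^ (-((N : ℝ) / p))) ^ q) ^ (1 / q) *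
      (∫⁻ τ in Set.Ioc t m, ((g τ) ^ (1 / p)) ^ p) ^ (1 / p) := by
    have h := ENNReal.lintegral_mul_le_Lp_mul_Lq (volume.restrict (Set.Ioc t m)) hpq.symm
      hwmeas.aemeasurable ((show Measurable fun τ => (g τ) ^ (1 / p) from
        hg.pow measurable_const).aemeasurable)
    simpa using h
  -- collapse the inner rpow
  have hgp : ∀ τ, ((g τ) ^ (1 / p)) ^ p = g τ := by
    intro τ
    rw [← ENNReal.rpow_mul, one_div, inv_mul_cancel₀ hp0.ne', ENNReal.rpow_one]
  have hgle : (∫⁻ τ in Set.Ioc t m, g τ) ≤ ∫⁻ z, f z ^ p := by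
    refine (setLIntegral_le_lintegral _ _).trans (le_of_eq ?_)
    rw [Measure.volume_eq_prod, lintegral_prod _ hfp.aemeasurable]
  -- the weight integral
  have hWcongr : (∫⁻ τ in Set.Ioc t m, ENNReal.ofReal ((τ - t) ^ (-((N : ℝ) / p))) ^ q)
      = ∫⁻ τ in Set.Ioc t m, ENNReal.ofReal ((τ - t) ^ (-a)) := by
    refine setLIntegral_congr_fun measurableSet_Ioc (fun τ hτ => ?_)
    have hc : 0 < τ - t := by linarith [hτ.1]
    rw [ENNReal.ofReal_rpow_of_pos (Real.rpow_pos_of_pos hc _),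
      ← Real.rpow_mul hc.le, show -((N : ℝ) / p) * q = -a by rw [ha_def]; ring]
  have hWint : (∫⁻ τ in Set.Ioc t m, ENNReal.ofReal ((τ - t) ^ (-a)))
      = ENNReal.ofReal (((s - t) / 2) ^ (1 - a) / (1 - a)) := by
    have hii : IntervalIntegrable (fun τ : ℝ => (τ - t) ^ (-a)) volume t m := by
      have h0 := (intervalIntegral.intervalIntegrable_rpow' (a := 0) (b := m - t)
        (show (-1 : ℝ) < -a by linarith)).comp_sub_right t
      simpa using h0
    have hIoc : IntegrableOn (fun τ : ℝ => (τ - t) ^ (-a)) (Set.Ioc t m) volume :=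
      (intervalIntegrable_iff_integrableOn_Ioc_of_le htm.le).1 hii
    rw [← ofReal_integral_eq_lintegral_ofReal hIoc
      ((ae_restrict_iff' measurableSet_Ioc).2 (ae_of_all _ fun τ hτ =>
        Real.rpow_nonneg (by linarith [hτ.1]) _))]
    congr 1
    rw [← intervalIntegral.integral_of_le htm.le,
      intervalIntegral.integral_comp_sub_right (fun u => u ^ (-a)) t, sub_self,
      integral_rpow (Or.inl (by linarith)),
      Real.zero_rpow (by linarith : -a + 1 ≠ 0), hmt,
      show -a + 1 = 1 - a by ring, sub_zero]
  -- put everything together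
  have hRq_ne_top : volume R ^ (1 / q) ≠ ⊤ :=
    ENNReal.rpow_ne_top_of_nonneg (by positivity) hRfin.ne
  have hD : (0 : ℝ) < (s - t) / 2 := by linarith
  have h2 : (((s - t) / 2 : ℝ) ^ (1 - a) / (1 - a)) ^ (1 / q) = C * (s - t) ^ e := by
    rw [div_eq_mul_inv (((s - t) / 2) ^ (1 - a)) (1 - a),
      Real.mul_rpow (by positivity) (by positivity),
      ← Real.rpow_mul hD.le, show (1 - a) * (1 / q) = e by rw [he]; ring,
      div_eq_mul_inv (s - t) 2, Real.mul_rpow (by linarith) (by norm_num), hC_def]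
    ring
  calc (∫⁻ σ in R, ∫⁻ τ in Set.Ioc t m, f (τ, x + (τ - t) • (σ + θ)))
      = ∫⁻ τ in Set.Ioc t m, ∫⁻ σ in R, f (τ, x + (τ - t) • (σ + θ)) := hswap
    _ ≤ ∫⁻ τ in Set.Ioc t m, volume R ^ (1 / q) *
          (ENNReal.ofReal ((τ - t) ^ (-((N : ℝ) / p))) * (g τ) ^ (1 / p)) :=
        lintegral_mono_ae ((ae_restrict_iff' measurableSet_Ioc).2
          (ae_of_all _ fun τ hτ => key τ hτ.1))
    _ = volume R ^ (1 / q) * ∫⁻ τ in Set.Ioc t m,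
          ENNReal.ofReal ((τ - t) ^ (-((N : ℝ) / p))) * (g τ) ^ (1 / p) :=
        lintegral_const_mul' _ _ hRq_ne_top
    _ ≤ volume R ^ (1 / q) *
          ((∫⁻ τ in Set.Ioc t m, ENNReal.ofReal ((τ - t) ^ (-((N : ℝ) / p))) ^ q) ^ (1 / q) *
           (∫⁻ τ in Set.Ioc t m, ((g τ) ^ (1 / p)) ^ p) ^ (1 / p)) :=
        mul_le_mul_right holderτ _
    _ ≤ volume R ^ (1 / q) *
          (ENNReal.ofReal (((s - t) / 2) ^ (1 - a) / (1 - a)) ^ (1 / q) *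
           (∫⁻ z, f z ^ p) ^ (1 / p)) := by
        rw [hWcongr, hWint]
        refine mul_le_mul_right (mul_le_mul_right ?_ _) _
        refine ENNReal.rpow_le_rpow ?_ (by positivity)
        simp_rw [hgp]
        exact hgle
    _ = ENNReal.ofReal C * volume R ^ (1 / q) * (∫⁻ z, f z ^ p) ^ (1 / p) *
          ENNReal.ofReal ((s - t) ^ e) := by
        rw [ENNReal.ofReal_rpow_of_pos (by positivity), h2,
          ENNReal.ofReal_mul hC.le]
        ring
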